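/- For every nonempty finite set F ⊂ ℝ and every ε > 0, one has (1/|F|²)·Σ_{x,x'∈F, x≠x'} (−log|x−x'|) + (2/|F|)·Σ_{x∈F} log⁺|x| ≥ (1/|F|²)·Σ_{x∈F} Σ_{x'∈F} ∫₀¹∫₀¹ −log| x + ε·e^{2πit} − x' − ε·e^{2πis} | dt ds + (2/|F|)·Σ_{x∈F} ∫₀¹ log⁺| x + ε·e^{2πit} | dt − 2ε + (log ε)/|F|. -/

import Mathlib

/-- log⁺ -/
noncomputable def logPlus (t : ℝ) : ℝ := max (Real.log t) 0

open MeasureTheory intervalIntegral Real Complex Set Filter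

noncomputable def ee (t : ℝ) : ℂ := Complex.exp (2 * Real.pi * Complex.I * t)

lemma ee_add (a b : ℝ) : ee (a + b) = ee a * ee b := by
  simp [ee, ← Complex.exp_add]; ring_nf

lemma ee_periodic : Function.Periodic ee 1 := by
  intro t; rw [ee_add]; simp [ee, Complex.exp_two_pi_mul_I]

lemma abs_ee (t : ℝ) : ‖ee t‖ = 1 := by
  simp [ee, Complex.norm_exp]

lemma ee_ne_zero (t : ℝ) : ee t ≠ 0 := by
  intro h; have := abs_ee t; rw [h] at this; simp at this

lemma continuous_ee : Continuous ee := by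
  unfold ee; fun_prop

lemma ee_half_add (t : ℝ) : ee (t + 1/2) = - ee t := by
  rw [ee_add]
  have : ee (1/2) = -1 := by
    have : (2 * Real.pi * Complex.I * ((1:ℝ)/2 : ℝ)) = Real.pi * Complex.I := by
      push_cast; ring
    rw [ee, this, Complex.exp_pi_mul_I]
  rw [this]; ring

lemma ee_two_mul (t : ℝ) : ee (2 * t) = ee t ^ 2 := by
  rw [ee, ee, ← Complex.exp_nat_mul]
  push_cast; ring_nf

lemma abs_one_sub_ee (s : ℝ) : ‖1 - ee s‖ = 2 * |Real.sin (Real.pi * s)| := by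
  have h : ee s = Complex.exp ((2*Real.pi*s : ℝ) * Complex.I) := by
    rw [ee]; norm_num; ring_nf
  have hre : (1 - ee s).re = 1 - Real.cos (2*Real.pi*s) := by
    rw [h, Complex.sub_re, Complex.one_re, Complex.exp_ofReal_mul_I_re]
  have him : (1 - ee s).im = - Real.sin (2*Real.pi*s) := by
    rw [h, Complex.sub_im, Complex.one_im, Complex.exp_ofReal_mul_I_im]; ring
  have e1 : Real.cos (2*Real.pi*s) = Real.cos (2*(Real.pi*s)) := by ring_nf
  have h2 : Real.cos (2*Real.pi*s) = 1 - 2 * Real.sin (Real.pi * s)^2 := by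
    rw [e1, Real.cos_two_mul']
    nlinarith [Real.sin_sq_add_cos_sq (Real.pi*s)]
  have habs2 : (‖1 - ee s‖)^2 = (2 * |Real.sin (Real.pi * s)|)^2 := by
    have h3 : Real.sin (2*Real.pi*s) = 2 * Real.sin (Real.pi*s) * Real.cos (Real.pi*s) := by
      rw [show (2*Real.pi*s) = 2*(Real.pi*s) by ring, Real.sin_two_mul]
    rw [Complex.sq_norm, Complex.normSq_apply, hre, him, h2, h3]
    nlinarith [_root_.sq_abs (Real.sin (Real.pi*s)), Real.sin_sq_add_cos_sq (Real.pi*s)]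
  nlinarith [norm_nonneg (1 - ee s), abs_nonneg (Real.sin (Real.pi * s))]

lemma intlog01 : IntervalIntegrable Real.log volume 0 1 := by
  have h : IntervalIntegrable (fun x : ℝ => -Real.log x) volume 0 1 := by
    apply intervalIntegrable_deriv_of_nonneg (g := fun x : ℝ => x - x * Real.log x)
    · exact (continuous_id.sub Real.continuous_mul_log).continuousOn
    · intro x hx
      rw [min_eq_left (by norm_num : (0:ℝ) ≤ 1)] at hx
      rw [max_eq_right (by norm_num : (0:ℝ) ≤ 1)] at hx
      have h1 : HasDerivAt (fun x : ℝ => x - x * Real.log x) (1 - (Real.log x + 1)) x :=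
        (hasDerivAt_id x).sub (Real.hasDerivAt_mul_log (ne_of_gt hx.1))
      convert h1 using 1; ring
    · intro x hx
      rw [min_eq_left (by norm_num : (0:ℝ) ≤ 1)] at hx
      rw [max_eq_right (by norm_num : (0:ℝ) ≤ 1)] at hx
      simp only [neg_nonneg]
      exact Real.log_nonpos (le_of_lt hx.1) (le_of_lt hx.2)
  have h2 := h.neg
  have he : (-fun x : ℝ => -Real.log x) = Real.log := by funext x; simp
  rwa [he] at h2

lemma intlog02 : IntervalIntegrable Real.log volume 0 2 :=
  intlog01.trans (intervalIntegrable_log (by norm_num))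

noncomputable def G (s : ℝ) : ℝ := Real.log (‖1 - ee s‖)

lemma G_periodic : Function.Periodic G 1 := by
  intro t; unfold G; rw [ee_periodic t]

lemma measurable_G : Measurable G :=
  Real.measurable_log.comp ((continuous_norm.comp
    (continuous_const.sub continuous_ee)).measurable)

lemma intG_first : IntervalIntegrable G volume 0 (1/2) := by
  have hdom : IntervalIntegrable (fun s : ℝ => |Real.log (4*s)| + Real.log 2) volume 0 (1/2) := by
    apply IntervalIntegrable.add _ (intervalIntegrable_const)
    apply IntervalIntegrable.abs
    have := intlog02.comp_mul_left (c := 4)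
    norm_num at this
    exact this
  apply hdom.mono_fun' (measurable_G.aestronglyMeasurable)
  rw [Set.uIoc_of_le (by norm_num : (0:ℝ) ≤ 1/2)]
  refine (ae_restrict_iff' measurableSet_Ioc).2 (Filter.Eventually.of_forall fun s hs => ?_)
  simp only [Set.mem_Ioc] at hs
  have hs0 : 0 < s := hs.1
  have hs2 : s ≤ 1/2 := hs.2
  have hsin : Real.sin (Real.pi * s) ≥ 2 * s := by
    have := Real.mul_le_sin (x := Real.pi * s) (by positivity)
      (by nlinarith [Real.pi_pos])
    calc 2*s = 2/Real.pi * (Real.pi * s) := by field_simp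
    _ ≤ Real.sin (Real.pi * s) := this
  have hsinpos : 0 < Real.sin (Real.pi * s) := by nlinarith
  have hGs : G s = Real.log (2 * Real.sin (Real.pi * s)) := by
    rw [G, abs_one_sub_ee, abs_of_pos hsinpos]
  have hub : 2 * Real.sin (Real.pi * s) ≤ 2 := by nlinarith [Real.sin_le_one (Real.pi * s)]
  have hlb : 4 * s ≤ 2 * Real.sin (Real.pi * s) := by nlinarith
  have h1 : Real.log (4*s) ≤ G s := by
    rw [hGs]; exact Real.log_le_log (by positivity) hlb
  have h2 : G s ≤ Real.log 2 := by
    rw [hGs]; exact Real.log_le_log (by positivity) hub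
  have hl2 : (0:ℝ) ≤ Real.log 2 := Real.log_nonneg (by norm_num)
  simp only [Real.norm_eq_abs]
  rw [abs_le]
  constructor
  · nlinarith [neg_abs_le (Real.log (4*s))]
  · nlinarith [le_abs_self (Real.log (4*s)), abs_nonneg (Real.log (4*s))]

lemma G_reflect (s : ℝ) : G (1 - s) = G s := by
  unfold G
  have h1 : ee (1 - s) = ee (-s) := by
    have := ee_periodic (-s); rw [← this]; ring_nf
  have h2 : ee (-s) = (ee s)⁻¹ := by
    have h3 : ee s * ee (-s) = 1 := by
      rw [← ee_add]; norm_num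
      show Complex.exp _ = 1
      norm_num
    exact eq_inv_of_mul_eq_one_left (by rw [mul_comm]; exact h3)
  have h4 : (1:ℂ) - (ee s)⁻¹ = (ee s)⁻¹ * (ee s - 1) := by
    field_simp [ee_ne_zero s]
  rw [h1, h2, h4, norm_mul, norm_inv, abs_ee, ← neg_sub (1:ℂ) (ee s), norm_neg]
  norm_num

lemma intG : IntervalIntegrable G volume 0 1 := by
  apply intG_first.trans
  have h := intG_first.comp_sub_left 1
  norm_num at h
  have he : (fun x : ℝ => G (1 - x)) = G := funext G_reflect
  rw [he] at h
  exact h.symm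

lemma G_add_int (x : ℝ) (m : ℤ) : G (x + m) = G x := by
  have h := (G_periodic.int_mul m) x
  simpa using h

lemma intG_shift (a : ℝ) : IntervalIntegrable G volume a (a+1) := by
  set m : ℤ := ⌊a⌋ with hm
  have key : ∀ k : ℤ, IntervalIntegrable G volume (k:ℝ) ((k:ℝ)+1) := by
    intro k
    have h := intG.comp_add_right (-(k:ℝ))
    have he : (fun x : ℝ => G (x + -(k:ℝ))) = G := by
      funext x
      have := G_add_int (x + -(k:ℝ)) k
      simpa using this.symm
    rw [he] at h
    norm_num at h
    rwa [add_comm 1 (k:ℝ)] at h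
  have h2 : IntervalIntegrable G volume (m:ℝ) ((m:ℝ)+2) := by
    have k2 := key (m+1)
    push_cast at k2
    apply (key m).trans
    rwa [show ((m:ℝ)+1+1) = (m:ℝ)+2 by ring] at k2
  apply h2.mono_set
  rw [Set.uIcc_of_le (by linarith : a ≤ a + 1), Set.uIcc_of_le (by linarith : (m:ℝ) ≤ (m:ℝ)+2)]
  have h3 : (m:ℝ) ≤ a := Int.floor_le a
  have h4 : a < (m:ℝ) + 1 := Int.lt_floor_add_one a
  exact Set.Icc_subset_Icc h3 (by linarith)

lemma intG_comp (a : ℝ) : IntervalIntegrable (fun s => G (s - a)) volume 0 1 := by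
  have h := (intG_shift (-a)).comp_sub_right a
  norm_num at h
  convert h using 2 <;> ring

lemma integral_G_comp (a : ℝ) : ∫ s in (0:ℝ)..1, G (s - a) = ∫ s in (0:ℝ)..1, G s := by
  rw [intervalIntegral.integral_comp_sub_right G a]
  have h := G_periodic.intervalIntegral_add_eq (0-a) 0
  norm_num at h ⊢
  convert h using 2
  ring

lemma ae_ee_ne (w : ℂ) : ∀ᵐ s : ℝ, ee s ≠ w := by
  have hc : Set.Countable {s : ℝ | ee s = w} := by
    rcases Set.eq_empty_or_nonempty {s : ℝ | ee s = w} with h | ⟨s₀, hs₀⟩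
    · rw [h]; exact Set.countable_empty
    · simp only [Set.mem_setOf_eq] at hs₀
      apply Set.Countable.mono _ (Set.countable_range (fun n : ℤ => s₀ + n))
      intro s hs
      simp only [Set.mem_setOf_eq] at hs
      have h1 : ee (s₀ + (s - s₀)) = ee s₀ * ee (s - s₀) := ee_add _ _
      rw [show s₀ + (s - s₀) = s by ring, hs, ← hs₀] at h1
      have h2 : ee (s - s₀) = 1 := by
        have h3 := mul_left_cancel₀ (ee_ne_zero s₀)
          (show ee s₀ * ee (s - s₀) = ee s₀ * 1 by rw [mul_one, ← h1])
        exact h3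
      rw [ee, Complex.exp_eq_one_iff] at h2
      obtain ⟨n, hn⟩ := h2
      have hIpi : (2 * Real.pi * Complex.I : ℂ) ≠ 0 := by
        simp [Complex.I_ne_zero, Real.pi_ne_zero]
      have h4 : ((s - s₀ : ℝ) : ℂ) = (n : ℂ) := by
        apply mul_right_cancel₀ hIpi
        linear_combination hn
      have h5 : s - s₀ = (n : ℝ) := by exact_mod_cast h4
      exact ⟨n, show s₀ + (n:ℝ) = s by linarith⟩
  have h0 : volume {s : ℝ | ee s = w} = 0 := hc.measure_zero _
  rw [MeasureTheory.ae_iff]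
  convert h0 using 2
  simp

noncomputable def KK (z : ℂ) : ℝ := ∫ s in (0:ℝ)..1, Real.log (‖z - ee s‖)

lemma cont_f {z : ℂ} (h : ‖z‖ ≠ 1) :
    Continuous (fun s : ℝ => Real.log (‖z - ee s‖)) := by
  apply Continuous.log
  · exact continuous_norm.comp (continuous_const.sub continuous_ee)
  · intro s
    intro h0
    simp only [Function.comp_apply, norm_eq_zero, sub_eq_zero] at h0
    exact h (by rw [h0, abs_ee])

lemma ee_arg {z : ℂ} (h : ‖z‖ = 1) : z = ee (z.arg / (2 * Real.pi)) := by
  have h1 : ee (z.arg / (2 * Real.pi)) = Complex.exp (z.arg * Complex.I) := by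
    rw [ee]
    congr 1
    have hpi : (Real.pi : ℂ) ≠ 0 := by exact_mod_cast Real.pi_ne_zero
    push_cast
    field_simp
  rw [h1]
  conv_lhs => rw [← Complex.norm_mul_exp_arg_mul_I z]
  rw [h, Complex.ofReal_one, one_mul]

lemma fun_eq_G_comp {z : ℂ} (h : ‖z‖ = 1) :
    (fun s : ℝ => Real.log (‖z - ee s‖))
      = fun s => G (s - z.arg / (2 * Real.pi)) := by
  set a := z.arg / (2 * Real.pi)
  funext s
  have h1 : z - ee s = ee a * (1 - ee (s - a)) := by
    rw [mul_sub, mul_one, ← ee_add]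
    rw [show a + (s - a) = s by ring, ← ee_arg h]
  rw [G, h1, norm_mul, abs_ee, one_mul]

lemma intK (z : ℂ) : IntervalIntegrable (fun s : ℝ => Real.log (‖z - ee s‖)) volume 0 1 := by
  by_cases h : ‖z‖ = 1
  · rw [fun_eq_G_comp h]
    exact intG_comp _
  · exact (cont_f h).intervalIntegrable 0 1

lemma K_circle {z : ℂ} (h : ‖z‖ = 1) : KK z = KK 1 := by
  unfold KK
  rw [fun_eq_G_comp h]
  have h2 : (fun s : ℝ => Real.log (‖1 - ee s‖)) = G := rfl
  rw [h2, integral_G_comp]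

lemma K_double (z : ℂ) : KK (z^2) = 2 * KK z := by
  set f : ℝ → ℝ := fun s => Real.log (‖z - ee s‖) with hf
  have i1 : IntervalIntegrable f volume 0 (1/2) := by
    apply (intK z).mono_set
    rw [Set.uIcc_of_le (by norm_num : (0:ℝ) ≤ 1/2), Set.uIcc_of_le (by norm_num : (0:ℝ) ≤ 1)]
    exact Set.Icc_subset_Icc (le_refl _) (by norm_num)
  have i2 : IntervalIntegrable f volume (1/2) 1 := by
    apply (intK z).mono_set
    rw [Set.uIcc_of_le (by norm_num : (1/2:ℝ) ≤ 1), Set.uIcc_of_le (by norm_num : (0:ℝ) ≤ 1)]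
    exact Set.Icc_subset_Icc (by norm_num) (le_refl _)
  have i2' : IntervalIntegrable (fun s => f (s + 1/2)) volume 0 (1/2) := by
    have h := i2.comp_add_right (1/2)
    norm_num at h
    exact h
  have hsplit : KK z = (∫ s in (0:ℝ)..(1/2), f s) + ∫ s in (1/2:ℝ)..1, f s :=
    (intervalIntegral.integral_add_adjacent_intervals i1 i2).symm
  have hshift : ∫ s in (1/2:ℝ)..1, f s = ∫ s in (0:ℝ)..(1/2), f (s + 1/2) := by
    rw [intervalIntegral.integral_comp_add_right f (1/2)]
    norm_num
  have hsum : (∫ s in (0:ℝ)..(1/2), f s) + (∫ s in (0:ℝ)..(1/2), f (s + 1/2))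
      = ∫ s in (0:ℝ)..(1/2), (f s + f (s + 1/2)) :=
    (intervalIntegral.integral_add i1 i2').symm
  have hae : (∫ s in (0:ℝ)..(1/2), (f s + f (s + 1/2)))
      = ∫ s in (0:ℝ)..(1/2), Real.log (‖z^2 - ee (2 * s)‖) := by
    apply intervalIntegral.integral_congr_ae
    filter_upwards [ae_ee_ne z, ae_ee_ne (-z)] with s h1 h2 _
    have hz1 : z - ee s ≠ 0 := sub_ne_zero_of_ne (Ne.symm h1)
    have hz2 : z + ee s ≠ 0 := fun hh => h2 (by linear_combination hh)
    have e1 : f (s + 1/2) = Real.log (‖z + ee s‖) := by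
      rw [hf]; simp only []; rw [ee_half_add s, sub_neg_eq_add]
    rw [e1, hf]
    simp only []
    rw [← Real.log_mul ((norm_ne_zero_iff.mpr hz1)) ((norm_ne_zero_iff.mpr hz2)), ← norm_mul]
    rw [show (z - ee s) * (z + ee s) = z^2 - (ee s)^2 by ring, ← ee_two_mul]
  have hhalf : (∫ s in (0:ℝ)..(1/2), Real.log (‖z^2 - ee (2 * s)‖))
      = 2⁻¹ * ∫ s in (0:ℝ)..1, Real.log (‖z^2 - ee s‖) := by
    have h := intervalIntegral.integral_comp_mul_left
      (fun s => Real.log (‖z^2 - ee s‖)) (by norm_num : (2:ℝ) ≠ 0) (a := 0) (b := 1/2)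
    norm_num at h
    rw [h]
    norm_num
  have : KK z = 2⁻¹ * KK (z^2) := by
    rw [hsplit, hshift, hsum, hae, hhalf]; rfl
  rw [this]; ring

lemma K_one : KK 1 = 0 := by
  have h := K_double 1
  norm_num at h
  linarith

lemma K_bound {z : ℂ} {r : ℝ} (h1 : ‖z‖ ≤ r) (h2 : r < 1) :
    |KK z| ≤ max (Real.log 2) (-Real.log (1-r)) := by
  set C := max (Real.log 2) (-Real.log (1-r)) with hC
  have hr0 : 0 ≤ r := le_trans (norm_nonneg z) h1
  have key : ∀ s ∈ Set.uIoc (0:ℝ) 1, ‖Real.log (‖z - ee s‖)‖ ≤ C := by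
    intro s _
    have hub : ‖z - ee s‖ ≤ 2 := by
      have h3 := norm_sub_le z (ee s)
      rw [abs_ee] at h3
      linarith
    have hlb : 1 - r ≤ ‖z - ee s‖ := by
      have h3 := norm_sub_norm_le (ee s) z
      rw [abs_ee] at h3
      have h4 : ‖ee s - z‖ = ‖z - ee s‖ := by
        rw [← neg_sub, norm_neg]
      linarith
    rw [Real.norm_eq_abs, abs_le]
    constructor
    · have : Real.log (1-r) ≤ Real.log (‖z - ee s‖) :=
        Real.log_le_log (by linarith) hlb
      have hCge : -Real.log (1-r) ≤ C := le_max_right _ _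
      linarith
    · have : Real.log (‖z - ee s‖) ≤ Real.log 2 :=
        Real.log_le_log (by linarith) hub
      exact le_trans this (le_max_left _ _)
  have := intervalIntegral.norm_integral_le_of_norm_le_const key
  simpa [KK] using this


lemma K_iter (z : ℂ) (n : ℕ) : KK (z^(2^n)) = 2^n * KK z := by
  induction n with
  | zero => simp
  | succ n ih =>
    have h1 : z^(2^(n+1)) = (z^(2^n))^2 := by
      rw [← pow_mul, pow_succ]
    rw [h1, K_double, ih]
    ring

lemma K_zero_of_lt {z : ℂ} (h : ‖z‖ < 1) : KK z = 0 := by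
  set r := ‖z‖ with hr
  have hr0 : 0 ≤ r := norm_nonneg z
  set C := max (Real.log 2) (-Real.log (1-r)) with hC
  have hbound : ∀ n : ℕ, |KK z| ≤ C / 2^n := by
    intro n
    have habs : ‖z^(2^n)‖ ≤ r := by
      rw [norm_pow]
      exact pow_le_of_le_one hr0 (le_of_lt h) (by positivity)
    have h1 := K_bound habs h
    rw [K_iter z n] at h1
    rw [abs_mul, abs_of_pos (by positivity : (0:ℝ) < (2:ℝ)^n)] at h1
    have h2 : 2^n * |KK z| ≤ C := by rw [hC]; exact h1
    calc |KK z| = (2^n)⁻¹ * ((2:ℝ)^n * |KK z|) := by field_simp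
    _ ≤ (2^n)⁻¹ * C := mul_le_mul_of_nonneg_left h2 (by positivity)
    _ = C / 2^n := by ring
  have htend : Filter.Tendsto (fun n : ℕ => C / 2^n) Filter.atTop (nhds 0) := by
    have h1 : Filter.Tendsto (fun n : ℕ => ((1:ℝ)/2)^n) Filter.atTop (nhds 0) :=
      tendsto_pow_atTop_nhds_zero_of_lt_one (by norm_num) (by norm_num)
    have h2 := h1.const_mul C
    rw [mul_zero] at h2
    convert h2 using 2 with n
    rw [div_pow, one_pow]
    ring
  have h0 : |KK z| ≤ 0 := ge_of_tendsto htend (Filter.Eventually.of_forall hbound)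
  have := abs_nonneg (KK z)
  have : |KK z| = 0 := le_antisymm h0 this
  exact abs_eq_zero.mp this

lemma ee_neg (s : ℝ) : ee (-s) = (ee s)⁻¹ := by
  have h3 : ee s * ee (-s) = 1 := by
    rw [← ee_add]; norm_num
    show Complex.exp _ = 1
    norm_num
  exact eq_inv_of_mul_eq_one_left (by rw [mul_comm]; exact h3)

lemma K_log_of_gt {z : ℂ} (h : 1 < ‖z‖) : KK z = Real.log (‖z‖) := by
  have hz0 : z ≠ 0 := by
    intro h0; rw [h0] at h; simp at h; linarith
  have hinv : ‖z⁻¹‖ < 1 := by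
    rw [norm_inv]
    rw [inv_lt_one_iff₀]
    right; exact h
  have hpoint : ∀ s : ℝ, Real.log (‖z - ee s‖)
      = Real.log (‖z‖) + Real.log (‖z⁻¹ - ee (-s)‖) := by
    intro s
    have h1 : z - ee s = z * ee s * (ee (-s) - z⁻¹) := by
      rw [ee_neg]
      field_simp [ee_ne_zero s]
    have h2 : ‖z⁻¹ - ee (-s)‖ ≠ 0 := by
      rw [ne_eq, norm_eq_zero, sub_eq_zero]
      intro hh
      rw [hh, abs_ee] at hinv
      norm_num at hinv
    have habs1 : ‖ee (-s) - z⁻¹‖ = ‖z⁻¹ - ee (-s)‖ := by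
      rw [← neg_sub, norm_neg]
    rw [h1, norm_mul, norm_mul, abs_ee, mul_one, habs1]
    rw [Real.log_mul ((norm_ne_zero_iff.mpr hz0)) h2]
  have hcont : Continuous (fun s : ℝ => Real.log (‖z⁻¹ - ee s‖)) :=
    cont_f (ne_of_lt hinv)
  have hintc : IntervalIntegrable (fun s : ℝ => Real.log (‖z⁻¹ - ee (-s)‖)) volume 0 1 :=
    (hcont.comp continuous_neg).intervalIntegrable 0 1
  have : KK z = ∫ s in (0:ℝ)..1,
      (Real.log (‖z‖) + Real.log (‖z⁻¹ - ee (-s)‖)) := by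
    unfold KK
    apply intervalIntegral.integral_congr
    intro s _
    exact hpoint s
  rw [this, intervalIntegral.integral_add (intervalIntegrable_const) hintc]
  have hneg : (∫ s in (0:ℝ)..1, Real.log (‖z⁻¹ - ee (-s)‖)) = KK z⁻¹ := by
    rw [intervalIntegral.integral_comp_neg (fun s => Real.log (‖z⁻¹ - ee s‖)), neg_zero]
    have hper : Function.Periodic (fun s : ℝ => Real.log (‖z⁻¹ - ee s‖)) 1 := by
      intro t; simp only [ee_periodic t]
    have h5 := hper.intervalIntegral_add_eq (-1 : ℝ) 0
    norm_num at h5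
    exact h5
  rw [hneg, K_zero_of_lt hinv]
  simp

lemma K_eq (z : ℂ) : KK z = logPlus (‖z‖) := by
  rcases lt_trichotomy (‖z‖) 1 with h | h | h
  · rw [K_zero_of_lt h, logPlus]
    rw [max_eq_right]
    exact Real.log_nonpos (norm_nonneg z) (le_of_lt h)
  · rw [K_circle h, K_one, logPlus, h]
    simp [Real.log_one]
  · rw [K_log_of_gt h, logPlus]
    rw [max_eq_left]
    exact le_of_lt (Real.log_pos h)

lemma II_congr_ae {f g : ℝ → ℝ} (h : ∀ᵐ s : ℝ, f s = g s)
    (hf : IntervalIntegrable f volume 0 1) : IntervalIntegrable g volume 0 1 := by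
  rw [intervalIntegrable_iff] at hf ⊢
  exact hf.congr (MeasureTheory.ae_restrict_of_ae h)

lemma scaled_pointwise {c : ℂ} {r : ℝ} (hr : 0 < r) {s : ℝ} (hs : ee s ≠ c / r) :
    Real.log (‖c - r * ee s‖)
      = Real.log r + Real.log (‖c / r - ee s‖) := by
  have hr0 : (r : ℂ) ≠ 0 := by exact_mod_cast ne_of_gt hr
  have h1 : c - r * ee s = (r:ℂ) * (c / r - ee s) := by
    field_simp
  have h2 : ‖c / r - ee s‖ ≠ 0 := by
    rw [ne_eq, norm_eq_zero, sub_eq_zero]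
    intro hh; exact hs (by rw [hh])
  rw [h1, norm_mul, Complex.norm_real, Real.norm_eq_abs, abs_of_pos hr,
    Real.log_mul (ne_of_gt hr) h2]

lemma intKr {c : ℂ} {r : ℝ} (hr : 0 < r) :
    IntervalIntegrable (fun s : ℝ => Real.log (‖c - r * ee s‖)) volume 0 1 := by
  apply II_congr_ae _ ((_root_.intervalIntegrable_const (c := Real.log r)).add (intK (c/r)))
  filter_upwards [ae_ee_ne (c/r)] with s hs
  exact (scaled_pointwise hr hs).symm

lemma Kr_eq {c : ℂ} {r : ℝ} (hr : 0 < r) :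
    (∫ s in (0:ℝ)..1, Real.log (‖c - r * ee s‖))
      = Real.log r + logPlus (‖c‖ / r) := by
  have h1 : (∫ s in (0:ℝ)..1, Real.log (‖c - r * ee s‖))
      = ∫ s in (0:ℝ)..1, (Real.log r + Real.log (‖c / r - ee s‖)) := by
    apply intervalIntegral.integral_congr_ae
    filter_upwards [ae_ee_ne (c/r)] with s hs _
    exact scaled_pointwise hr hs
  rw [h1, intervalIntegral.integral_add (_root_.intervalIntegrable_const) (intK (c/r))]
  have h2 : (∫ s in (0:ℝ)..1, Real.log (‖c / r - ee s‖)) = KK (c/r) := rfl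
  rw [h2, K_eq]
  have h3 : ‖c / r‖ = ‖c‖ / r := by
    rw [norm_div, Complex.norm_real, Real.norm_eq_abs, abs_of_pos hr]
  rw [h3]
  simp

lemma continuous_logPlus : Continuous logPlus := by
  rw [continuous_iff_continuousAt]
  intro x
  rcases eq_or_ne x 0 with rfl | h
  · have h0 : logPlus =ᶠ[nhds (0:ℝ)] fun _ => 0 := by
      have hmem : Set.Ioo (-1:ℝ) 1 ∈ nhds (0:ℝ) := by
        apply Ioo_mem_nhds <;> norm_num
      filter_upwards [hmem] with y hy
      rw [logPlus, max_eq_right]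
      rw [← Real.log_abs]
      exact Real.log_nonpos (abs_nonneg y) (by rw [abs_le]; exact ⟨le_of_lt hy.1, le_of_lt hy.2⟩)
    exact Filter.EventuallyEq.continuousAt h0
  · exact (Real.continuousAt_log h).max continuousAt_const

lemma logPlus_nonneg (t : ℝ) : 0 ≤ logPlus t := le_max_right _ _

lemma logPlus_mono {a b : ℝ} (ha : 0 ≤ a) (hab : a ≤ b) : logPlus a ≤ logPlus b := by
  rcases eq_or_lt_of_le ha with h | h
  · rw [logPlus, ← h, Real.log_zero]
    simp [logPlus_nonneg b]
  · apply max_le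
    · exact le_max_of_le_left (Real.log_le_log h hab)
    · exact le_max_right _ _

lemma logPlus_eq_log_max {m : ℝ} (hm : 0 ≤ m) : logPlus m = Real.log (max m 1) := by
  rcases le_or_gt m 1 with h | h
  · rw [logPlus, max_eq_right (Real.log_nonpos hm h), max_eq_right h, Real.log_one]
  · rw [logPlus, max_eq_left (le_of_lt (Real.log_pos h)), max_eq_left (le_of_lt h)]

lemma logPlus_add_le {m ε : ℝ} (hm : 0 ≤ m) (hε : 0 < ε) :
    logPlus (m + ε) ≤ logPlus m + ε := by
  have h1 : m + ε ≤ (max m 1) * (1 + ε) := by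
    have hmax1 : (1:ℝ) ≤ max m 1 := le_max_right _ _
    have hmaxm : m ≤ max m 1 := le_max_left _ _
    nlinarith
  have h2 : logPlus (m + ε) ≤ Real.log ((max m 1) * (1 + ε)) := by
    rw [logPlus_eq_log_max (by positivity)]
    apply Real.log_le_log (by positivity)
    exact le_trans (max_le h1 (by nlinarith [le_max_right m 1])) (le_refl _)
  rw [Real.log_mul (by positivity) (by positivity), ← logPlus_eq_log_max hm] at h2
  have h3 : Real.log (1 + ε) ≤ ε := by
    have := Real.log_le_sub_one_of_pos (by positivity : (0:ℝ) < 1 + ε)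
    linarith
  linarith

lemma inner_int (x x' : ℝ) {ε : ℝ} (hε : 0 < ε) (t : ℝ) :
    (∫ s in (0:ℝ)..1, -Real.log (‖((x:ℂ) + (ε:ℂ) * ee t) - ((x':ℂ) + (ε:ℂ) * ee s)‖))
      = -(Real.log ε + logPlus (‖(x:ℂ) - (x':ℂ) + (ε:ℂ) * ee t‖ / ε)) := by
  have harg : ∀ s : ℝ, ((x:ℂ) + (ε:ℂ) * ee t) - ((x':ℂ) + (ε:ℂ) * ee s)
      = (((x:ℂ) - (x':ℂ) + (ε:ℂ) * ee t)) - (ε:ℂ) * ee s := fun s => by ring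
  simp only [harg]
  rw [intervalIntegral.integral_neg, Kr_eq hε]

lemma cont_inner (c : ℂ) (ε : ℝ) :
    Continuous (fun t : ℝ => -(Real.log ε + logPlus (‖c + (ε:ℂ) * ee t‖ / ε))) := by
  apply Continuous.neg
  apply Continuous.add continuous_const
  apply continuous_logPlus.comp
  apply Continuous.div_const
  exact continuous_norm.comp (continuous_const.add (continuous_const.mul continuous_ee))

lemma dbl_diag (x : ℝ) {ε : ℝ} (hε : 0 < ε) :
    (∫ t in (0:ℝ)..1, ∫ s in (0:ℝ)..1,
      -Real.log (‖((x:ℂ) + (ε:ℂ) * ee t) - ((x:ℂ) + (ε:ℂ) * ee s)‖))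
      = -Real.log ε := by
  have h : ∀ t : ℝ, (∫ s in (0:ℝ)..1,
      -Real.log (‖((x:ℂ) + (ε:ℂ) * ee t) - ((x:ℂ) + (ε:ℂ) * ee s)‖))
      = -Real.log ε := by
    intro t
    rw [inner_int x x hε t]
    have h1 : ‖(x:ℂ) - (x:ℂ) + (ε:ℂ) * ee t‖ = ε := by
      rw [sub_self, zero_add, norm_mul, Complex.norm_real, Real.norm_eq_abs, abs_of_pos hε, abs_ee, mul_one]
    rw [h1, div_self (ne_of_gt hε)]
    have h2 : logPlus 1 = 0 := by rw [logPlus, Real.log_one, max_self]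
    rw [h2, add_zero]
  rw [intervalIntegral.integral_congr (fun t _ => h t)]
  simp

lemma log_le_scaled {d ε : ℝ} (hd : 0 < d) (hε : 0 < ε) :
    Real.log d ≤ Real.log ε + logPlus (d / ε) := by
  have h1 : Real.log (d / ε) ≤ logPlus (d / ε) := le_max_left _ _
  rw [Real.log_div (ne_of_gt hd) (ne_of_gt hε)] at h1
  linarith

lemma dbl_offdiag {x x' : ℝ} (hne : x ≠ x') {ε : ℝ} (hε : 0 < ε) :
    (∫ t in (0:ℝ)..1, ∫ s in (0:ℝ)..1,
      -Real.log (‖((x:ℂ) + (ε:ℂ) * ee t) - ((x':ℂ) + (ε:ℂ) * ee s)‖))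
      ≤ -Real.log |x - x'| := by
  set c : ℂ := (x:ℂ) - (x':ℂ) with hc
  have hc0 : c ≠ 0 := by
    rw [hc, sub_ne_zero]
    exact_mod_cast hne
  have habsc : ‖c‖ = |x - x'| := by
    rw [hc, show (x:ℂ) - (x':ℂ) = ((x - x' : ℝ):ℂ) by push_cast; ring, Complex.norm_real, Real.norm_eq_abs]
  have habsc0 : 0 < ‖c‖ := norm_pos_iff.mpr hc0
  have hstep1 : (∫ t in (0:ℝ)..1, ∫ s in (0:ℝ)..1,
      -Real.log (‖((x:ℂ) + (ε:ℂ) * ee t) - ((x':ℂ) + (ε:ℂ) * ee s)‖))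
      = ∫ t in (0:ℝ)..1, -(Real.log ε + logPlus (‖c + (ε:ℂ) * ee t‖ / ε)) := by
    apply intervalIntegral.integral_congr
    intro t _
    exact inner_int x x' hε t
  have hgint : IntervalIntegrable (fun t : ℝ =>
      -Real.log (‖(-c) - (ε:ℂ) * ee t‖)) volume 0 1 := (intKr hε).neg
  have hstep2 : (∫ t in (0:ℝ)..1, -(Real.log ε + logPlus (‖c + (ε:ℂ) * ee t‖ / ε)))
      ≤ ∫ t in (0:ℝ)..1, -Real.log (‖(-c) - (ε:ℂ) * ee t‖) := by
    apply intervalIntegral.integral_mono_ae_restrict (by norm_num : (0:ℝ) ≤ 1)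
      ((cont_inner c ε).intervalIntegrable 0 1) hgint
    apply MeasureTheory.ae_restrict_of_ae
    filter_upwards [ae_ee_ne (-c / ε)] with t ht
    have hne0 : c + (ε:ℂ) * ee t ≠ 0 := by
      intro hh
      apply ht
      have hεc : (ε:ℂ) ≠ 0 := by exact_mod_cast ne_of_gt hε
      rw [eq_div_iff hεc]
      linear_combination hh
    have hd : 0 < ‖c + (ε:ℂ) * ee t‖ := norm_pos_iff.mpr hne0
    have heq : ‖(-c) - (ε:ℂ) * ee t‖ = ‖c + (ε:ℂ) * ee t‖ := by
      rw [show (-c) - (ε:ℂ) * ee t = -(c + (ε:ℂ) * ee t) by ring, norm_neg]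
    rw [heq]
    have := log_le_scaled hd hε
    linarith
  have hstep3 : (∫ t in (0:ℝ)..1, -Real.log (‖(-c) - (ε:ℂ) * ee t‖))
      = -(Real.log ε + logPlus (|x - x'| / ε)) := by
    rw [intervalIntegral.integral_neg, Kr_eq hε, norm_neg, habsc]
  have hfinal : -(Real.log ε + logPlus (|x - x'| / ε)) ≤ -Real.log |x - x'| := by
    have hd : 0 < |x - x'| := by rw [← habsc]; exact habsc0
    have := log_le_scaled hd hε
    linarith
  rw [hstep1]
  exact le_trans hstep2 (le_of_eq hstep3) |>.trans hfinal

lemma logTerm_le (x : ℝ) {ε : ℝ} (hε : 0 < ε) :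
    (∫ t in (0:ℝ)..1, logPlus (‖(x:ℂ) + (ε:ℂ) * ee t‖)) ≤ logPlus |x| + ε := by
  have hcont : Continuous (fun t : ℝ => logPlus (‖(x:ℂ) + (ε:ℂ) * ee t‖)) := by
    apply continuous_logPlus.comp
    exact continuous_norm.comp (continuous_const.add (continuous_const.mul continuous_ee))
  have hpt : ∀ t : ℝ, logPlus (‖(x:ℂ) + (ε:ℂ) * ee t‖) ≤ logPlus |x| + ε := by
    intro t
    have h1 : ‖(x:ℂ) + (ε:ℂ) * ee t‖ ≤ |x| + ε := by
      have h2 := norm_add_le ((x:ℂ)) ((ε:ℂ) * ee t)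
      rw [Complex.norm_real, Real.norm_eq_abs, norm_mul, Complex.norm_real, Real.norm_eq_abs, abs_ee, mul_one,
        abs_of_pos hε] at h2
      exact h2
    calc logPlus (‖(x:ℂ) + (ε:ℂ) * ee t‖) ≤ logPlus (|x| + ε) :=
          logPlus_mono (norm_nonneg _) h1
    _ ≤ logPlus |x| + ε := logPlus_add_le (abs_nonneg x) hε
  calc (∫ t in (0:ℝ)..1, logPlus (‖(x:ℂ) + (ε:ℂ) * ee t‖))
      ≤ ∫ _ in (0:ℝ)..1, (logPlus |x| + ε) := by
        apply intervalIntegral.integral_mono_on (by norm_num : (0:ℝ) ≤ 1)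
          (hcont.intervalIntegrable 0 1) (_root_.intervalIntegrable_const)
        intro t _
        exact hpt t
  _ = logPlus |x| + ε := by simp

lemma ee_def (t : ℝ) : Complex.exp (2 * Real.pi * Complex.I * (t:ℂ)) = ee t := rfl

theorem statement7 (F : Finset ℝ) (hF : F.Nonempty) (ε : ℝ) (hε : 0 < ε) :
    ((F.card : ℝ) ^ 2)⁻¹ * (∑ x ∈ F, ∑ x' ∈ F.erase x, -Real.log |x - x'|)
        + 2 / (F.card : ℝ) * ∑ x ∈ F, logPlus |x| ≥
      ((F.card : ℝ) ^ 2)⁻¹ * (∑ x ∈ F, ∑ x' ∈ F,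
          (∫ t in (0:ℝ)..1, ∫ s in (0:ℝ)..1,
            -Real.log ‖((x : ℂ) + (ε : ℂ) * Complex.exp (2 * Real.pi * Complex.I * (t : ℂ)))
              - ((x' : ℂ) + (ε : ℂ) * Complex.exp (2 * Real.pi * Complex.I * (s : ℂ)))‖))
        + 2 / (F.card : ℝ) * ∑ x ∈ F,
            (∫ t in (0:ℝ)..1,
              logPlus ‖(x : ℂ) + (ε : ℂ) * Complex.exp (2 * Real.pi * Complex.I * (t : ℂ))‖)
        - 2 * ε + Real.log ε / (F.card : ℝ) := by
  simp only [ee_def]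
  set n : ℝ := (F.card : ℝ) with hn
  have hn0 : 0 < n := by
    rw [hn]
    exact_mod_cast Finset.card_pos.mpr hF
  set DI : ℝ → ℝ → ℝ := fun x x' => ∫ t in (0:ℝ)..1, ∫ s in (0:ℝ)..1,
      -Real.log (‖((x:ℂ) + (ε:ℂ) * ee t) - ((x':ℂ) + (ε:ℂ) * ee s)‖) with hDI
  have hsum1 : (∑ x ∈ F, ∑ x' ∈ F, DI x x')
      ≤ n * (-Real.log ε) + ∑ x ∈ F, ∑ x' ∈ F.erase x, -Real.log |x - x'| := by
    have hx : ∀ x ∈ F, ∑ x' ∈ F, DI x x'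
        ≤ -Real.log ε + ∑ x' ∈ F.erase x, -Real.log |x - x'| := by
      intro x hxF
      have hsplit : ∑ x' ∈ F, DI x x' = DI x x + ∑ x' ∈ F.erase x, DI x x' :=
        (Finset.add_sum_erase F (DI x) hxF).symm
      rw [hsplit, hDI]
      have hd : DI x x = -Real.log ε := dbl_diag x hε
      apply add_le_add
      · exact le_of_eq hd
      · apply Finset.sum_le_sum
        intro x' hx'
        have hne : x ≠ x' := fun hh => (Finset.mem_erase.mp hx').1 hh.symm
        exact dbl_offdiag hne hε
    calc (∑ x ∈ F, ∑ x' ∈ F, DI x x')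
        ≤ ∑ x ∈ F, (-Real.log ε + ∑ x' ∈ F.erase x, -Real.log |x - x'|) :=
          Finset.sum_le_sum hx
    _ = n * (-Real.log ε) + ∑ x ∈ F, ∑ x' ∈ F.erase x, -Real.log |x - x'| := by
        rw [Finset.sum_add_distrib, Finset.sum_const, nsmul_eq_mul, hn]
  have hsum2 : (∑ x ∈ F, ∫ t in (0:ℝ)..1, logPlus (‖(x:ℂ) + (ε:ℂ) * ee t‖))
      ≤ (∑ x ∈ F, logPlus |x|) + n * ε := by
    calc (∑ x ∈ F, ∫ t in (0:ℝ)..1, logPlus (‖(x:ℂ) + (ε:ℂ) * ee t‖))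
        ≤ ∑ x ∈ F, (logPlus |x| + ε) := Finset.sum_le_sum (fun x _ => logTerm_le x hε)
    _ = (∑ x ∈ F, logPlus |x|) + n * ε := by
        rw [Finset.sum_add_distrib, Finset.sum_const, nsmul_eq_mul, hn]
  set S : ℝ := ∑ x ∈ F, ∑ x' ∈ F.erase x, -Real.log |x - x'| with hS
  set T : ℝ := ∑ x ∈ F, logPlus |x| with hT
  have hmul1 : (n^2)⁻¹ * (∑ x ∈ F, ∑ x' ∈ F, DI x x')
      ≤ (n^2)⁻¹ * (n * (-Real.log ε) + S) :=
    mul_le_mul_of_nonneg_left hsum1 (by positivity)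
  have hmul2 : 2 / n * (∑ x ∈ F, ∫ t in (0:ℝ)..1, logPlus (‖(x:ℂ) + (ε:ℂ) * ee t‖))
      ≤ 2 / n * (T + n * ε) :=
    mul_le_mul_of_nonneg_left hsum2 (by positivity)
  have hid1 : (n^2)⁻¹ * (n * (-Real.log ε) + S) = (n^2)⁻¹ * S - Real.log ε / n := by
    field_simp
    ring
  have hid2 : 2 / n * (T + n * ε) = 2 / n * T + 2 * ε := by
    field_simp
  rw [ge_iff_le]
  calc (n^2)⁻¹ * (∑ x ∈ F, ∑ x' ∈ F, DI x x')
        + 2 / n * (∑ x ∈ F, ∫ t in (0:ℝ)..1, logPlus (‖(x:ℂ) + (ε:ℂ) * ee t‖))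
        - 2 * ε + Real.log ε / n
      ≤ ((n^2)⁻¹ * S - Real.log ε / n) + (2 / n * T + 2 * ε) - 2 * ε + Real.log ε / n := by
        rw [hid1] at hmul1
        rw [hid2] at hmul2
        linarith
    _ = (n^2)⁻¹ * S + 2 / n * T := by ring
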